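/- Let Q be a finite set indexing n×n matrices A_q, and suppose P is symmetric positive definite with A_qᵀP + PA_q < 0 for all q in Q. Then there exists γ > 0 and a symmetric positive definite matrix 𝒬 such that A_qᵀ𝒬 + 𝒬A_q + C_qᵀC_q < 0 for all q in Q, where C_q are given p×n matrices. (Quadratic stability implies existence of an observability grammian, continuous time.) -/

import Mathlib

open Matrix

lemma quad_cont {n : ℕ} (M : Matrix (Fin n) (Fin n) ℝ) :
    Continuous fun x : Fin n → ℝ => x ⬝ᵥ (M *ᵥ x) := by
  simp only [dotProduct, mulVec]
  fun_prop

lemma quad_smul {n : ℕ} (M : Matrix (Fin n) (Fin n) ℝ) (r : ℝ) (x : Fin n → ℝ) :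
    (r • x) ⬝ᵥ (M *ᵥ (r • x)) = r ^ 2 * (x ⬝ᵥ (M *ᵥ x)) := by
  simp [mulVec_smul, smul_dotProduct, dotProduct_smul, smul_eq_mul]
  ring

lemma key {n : ℕ} (S T : Matrix (Fin n) (Fin n) ℝ)
    (hS : ∀ x : Fin n → ℝ, x ≠ 0 → x ⬝ᵥ (S *ᵥ x) < 0)
    (hT : ∀ x : Fin n → ℝ, 0 ≤ x ⬝ᵥ (T *ᵥ x)) :
    ∃ c : ℝ, 0 < c ∧ ∀ x : Fin n → ℝ, x ≠ 0 →
      c * (x ⬝ᵥ (S *ᵥ x)) + x ⬝ᵥ (T *ᵥ x) < 0 := by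
  rcases Nat.eq_zero_or_pos n with h | h
  · subst h
    exact ⟨1, one_pos, fun x hx => absurd (Subsingleton.elim x 0) hx⟩
  haveI : Nonempty (Fin n) := ⟨⟨0, h⟩⟩
  have hne : (Metric.sphere (0 : Fin n → ℝ) 1).Nonempty :=
    NormedSpace.sphere_nonempty.mpr zero_le_one
  obtain ⟨u, huS, hu⟩ := (isCompact_sphere (0 : Fin n → ℝ) 1).exists_isMaxOn hne
    (quad_cont S).continuousOn
  obtain ⟨v, hvS, hv⟩ := (isCompact_sphere (0 : Fin n → ℝ) 1).exists_isMaxOn hne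
    (quad_cont T).continuousOn
  have hunorm : ‖u‖ = 1 := by simpa using mem_sphere_zero_iff_norm.mp huS
  have hune : u ≠ 0 := by
    intro h0; rw [h0] at hunorm; simp at hunorm
  set m : ℝ := -(u ⬝ᵥ (S *ᵥ u)) with hm
  have hmpos : 0 < m := by
    have := hS u hune; linarith
  set M : ℝ := v ⬝ᵥ (T *ᵥ v) with hM
  have hMnonneg : 0 ≤ M := hT v
  refine ⟨(M + 1) / m, by positivity, ?_⟩
  have hsph : ∀ w ∈ Metric.sphere (0 : Fin n → ℝ) 1,
      (M + 1) / m * (w ⬝ᵥ (S *ᵥ w)) + w ⬝ᵥ (T *ᵥ w) < 0 := by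
    intro w hw
    have h1 : w ⬝ᵥ (S *ᵥ w) ≤ u ⬝ᵥ (S *ᵥ u) := hu hw
    have h2 : w ⬝ᵥ (T *ᵥ w) ≤ M := hv hw
    have hc : 0 < (M + 1) / m := by positivity
    have h3 : (M + 1) / m * (w ⬝ᵥ (S *ᵥ w)) ≤ (M + 1) / m * (-m) :=
      mul_le_mul_of_nonneg_left (by rw [hm]; linarith) hc.le
    have h4 : (M + 1) / m * (-m) = -(M + 1) := by field_simp
    linarith
  intro x hx
  have hxnorm : 0 < ‖x‖ := norm_pos_iff.mpr hx
  have hwsph : ‖x‖⁻¹ • x ∈ Metric.sphere (0 : Fin n → ℝ) 1 := by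
    rw [mem_sphere_zero_iff_norm, norm_smul]
    simp [abs_of_pos (inv_pos.mpr hxnorm), inv_mul_cancel₀ hxnorm.ne']
  have hkey := hsph (‖x‖⁻¹ • x) hwsph
  rw [quad_smul, quad_smul] at hkey
  have hr2 : (0:ℝ) < ‖x‖ ^ 2 := by positivity
  have heq : ‖x‖ ^ 2 * ((M + 1) / m * (‖x‖⁻¹ ^ 2 * (x ⬝ᵥ (S *ᵥ x)))
        + ‖x‖⁻¹ ^ 2 * (x ⬝ᵥ (T *ᵥ x)))
      = (M + 1) / m * (x ⬝ᵥ (S *ᵥ x)) + x ⬝ᵥ (T *ᵥ x) := by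
    have hcancel : ‖x‖ ^ 2 * ‖x‖⁻¹ ^ 2 = 1 := by
      rw [← mul_pow, mul_inv_cancel₀ hxnorm.ne', one_pow]
    linear_combination ((M + 1) / m * (x ⬝ᵥ (S *ᵥ x)) + x ⬝ᵥ (T *ᵥ x)) * hcancel
  have h6 := mul_neg_of_pos_of_neg hr2 hkey
  linarith [heq ▸ h6]

lemma ctc_nonneg {n p : ℕ} (C : Matrix (Fin p) (Fin n) ℝ) (x : Fin n → ℝ) :
    0 ≤ x ⬝ᵥ ((Cᵀ * C) *ᵥ x) := by
  have h : x ⬝ᵥ ((Cᵀ * C) *ᵥ x) = (C *ᵥ x) ⬝ᵥ (C *ᵥ x) := by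
    rw [← mulVec_mulVec, dotProduct_mulVec, vecMul_transpose]
  rw [h]
  exact Finset.sum_nonneg fun i _ => mul_self_nonneg _

lemma posdef_smul {n : ℕ} {P : Matrix (Fin n) (Fin n) ℝ} (hP : P.PosDef) {c : ℝ}
    (hc : 0 < c) : (c • P).PosDef := by
  refine ⟨?_, fun x hx => ?_⟩
  · unfold Matrix.IsHermitian at *
    rw [conjTranspose_smul, hP.1]
    simp
  · have h := mul_pos hc (hP.2 hx)
    simp only [Finsupp.mul_sum] at h
    simp only [Matrix.smul_apply, smul_eq_mul, star_trivial]
    refine lt_of_lt_of_eq h (Finsupp.sum_congr fun i _ => Finsupp.sum_congr fun j _ => ?_)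
    simp only [star_trivial]
    ring


/-- Quadratic stability implies existence of an observability
grammian (continuous time): if `A_qᵀP + PA_q < 0` for all `q` in a finite set,
with `P` symmetric positive definite, then there are `γ > 0` and a symmetric
positive definite `𝒬` with `A_qᵀ𝒬 + 𝒬A_q + C_qᵀC_q < 0` for all `q`. -/
theorem stmt5 {n p : ℕ} {Q : Type*} [Fintype Q]
    (A : Q → Matrix (Fin n) (Fin n) ℝ) (C : Q → Matrix (Fin p) (Fin n) ℝ)
    (P : Matrix (Fin n) (Fin n) ℝ) (hP : P.PosDef)
    (hstab : ∀ q : Q, ∀ x : Fin n → ℝ, x ≠ 0 →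
      x ⬝ᵥ (((A q)ᵀ * P + P * A q) *ᵥ x) < 0) :
    ∃ γ : ℝ, 0 < γ ∧ ∃ 𝒬 : Matrix (Fin n) (Fin n) ℝ, 𝒬.PosDef ∧
      ∀ q : Q, ∀ x : Fin n → ℝ, x ≠ 0 →
        x ⬝ᵥ (((A q)ᵀ * 𝒬 + 𝒬 * A q + (C q)ᵀ * C q) *ᵥ x) < 0 := by
  have hkey : ∀ q : Q, ∃ c : ℝ, 0 < c ∧ ∀ x : Fin n → ℝ, x ≠ 0 →
      c * (x ⬝ᵥ (((A q)ᵀ * P + P * A q) *ᵥ x)) + x ⬝ᵥ (((C q)ᵀ * C q) *ᵥ x) < 0 :=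
    fun q => key _ _ (hstab q) (ctc_nonneg (C q))
  choose c hcpos hc using hkey
  set c₀ : ℝ := 1 + ∑ q : Q, c q with hc₀
  have hc₀pos : 0 < c₀ := by
    have : 0 ≤ ∑ q : Q, c q := Finset.sum_nonneg fun q _ => (hcpos q).le
    rw [hc₀]; linarith
  have hc₀ge : ∀ q : Q, c q ≤ c₀ := by
    intro q
    have h1 : c q ≤ ∑ q : Q, c q :=
      Finset.single_le_sum (fun q _ => (hcpos q).le) (Finset.mem_univ q)
    rw [hc₀]; linarith
  refine ⟨1, one_pos, c₀ • P, posdef_smul hP hc₀pos, fun q x hx => ?_⟩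
  have hexp : x ⬝ᵥ (((A q)ᵀ * (c₀ • P) + (c₀ • P) * A q + (C q)ᵀ * C q) *ᵥ x)
      = c₀ * (x ⬝ᵥ (((A q)ᵀ * P + P * A q) *ᵥ x)) + x ⬝ᵥ (((C q)ᵀ * C q) *ᵥ x) := by
    simp only [Matrix.mul_smul, Matrix.smul_mul, ← smul_add, add_mulVec,
      smul_mulVec, dotProduct_add, dotProduct_smul, smul_eq_mul, mul_add]
  rw [hexp]
  have hneg : x ⬝ᵥ (((A q)ᵀ * P + P * A q) *ᵥ x) < 0 := hstab q x hx
  have h1 : c₀ * (x ⬝ᵥ (((A q)ᵀ * P + P * A q) *ᵥ x))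
      ≤ c q * (x ⬝ᵥ (((A q)ᵀ * P + P * A q) *ᵥ x)) :=
    mul_le_mul_of_nonpos_right (hc₀ge q) hneg.le
  have h2 := hc q x hx
  linarith
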